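/- Let a₁,…,a_R be the R roots (with multiplicity) of the polynomial a^R − a^{R−1} + (1/2!) a^{R−2} − ⋯ + (−1)^R/R! = ∑_{k=0}^{R} (−1)^k a^{R−k}/k!. Then the power sums satisfy: ∑_r a_r = 1, ∑_r a_r^j = 0 for 2 ≤ j ≤ R, and ∑_r a_r^{R+1} = (−1)^{R+1}/R!. -/

import Mathlib

open Polynomial Finset

/-- Power sums of the roots of the truncated exponential polynomial
`∑_{k=0}^{R} (−1)^k a^{R−k}/k!`. -/
theorem power_sums_of_truncated_exponential_roots
    (R : ℕ) (hR : 1 ≤ R)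
    (p : Polynomial ℂ)
    (hp : p = ∑ k ∈ Finset.range (R + 1),
        Polynomial.C ((-1 : ℂ)^k / (Nat.factorial k : ℂ)) * Polynomial.X ^ (R - k)) :
    (p.roots.map (fun a => a)).sum = 1 ∧
    (∀ j : ℕ, 2 ≤ j → j ≤ R → (p.roots.map (fun a => a ^ j)).sum = 0) ∧
    (p.roots.map (fun a => a ^ (R + 1))).sum = (-1 : ℂ)^(R + 1) / (Nat.factorial R : ℂ) := by
  -- coefficients of `p`
  have hcoeff : ∀ j ≤ R, p.coeff (R - j) = (-1 : ℂ)^j / (Nat.factorial j : ℂ) := by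
    intro j hj
    rw [hp, finset_sum_coeff]
    rw [Finset.sum_eq_single j]
    · simp
    · intro k hk hkj
      simp only [coeff_C_mul, coeff_X_pow]
      rw [if_neg, mul_zero]
      simp only [Finset.mem_range] at hk
      omega
    · intro h
      exact absurd (Finset.mem_range.mpr (by omega)) h
  have hdegle : p.natDegree ≤ R := by
    rw [hp]
    refine Polynomial.natDegree_sum_le_of_forall_le _ _ ?_
    intro k _
    exact (natDegree_C_mul_le _ _).trans ((natDegree_X_pow _).le.trans (by omega))
  have hmonic : p.Monic := by
    have := hcoeff 0 (by omega)
    simp at this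
    exact Polynomial.monic_of_natDegree_le_of_coeff_eq_one R hdegle this
  have hdeg : p.natDegree = R := by
    refine le_antisymm hdegle ?_
    refine Polynomial.le_natDegree_of_ne_zero ?_
    have := hcoeff 0 (by omega)
    simp at this
    simp [this]
  set μ : Multiset ℂ := p.roots with hμ
  have hcard : Multiset.card μ = R := by
    rw [← hdeg]
    exact (Polynomial.splits_iff_card_roots.mp (IsAlgClosed.splits p))
  -- elementary symmetric functions of the roots
  have hE : ∀ j ≤ R, μ.esymm j = 1 / (Nat.factorial j : ℂ) := by
    intro j hj
    have h1 := Polynomial.coeff_eq_esymm_roots_of_card (by rw [hcard, hdeg]) (k := R - j) (by omega)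
    rw [hmonic.leadingCoeff, hdeg, hcoeff j hj] at h1
    have h2 : R - (R - j) = j := by omega
    rw [h2] at h1
    rw [one_mul, div_eq_mul_inv] at h1
    rw [one_div]
    exact (mul_left_cancel₀ (pow_ne_zero j (by norm_num : (-1:ℂ) ≠ 0)) h1).symm
  have hEtop : μ.esymm (R + 1) = 0 := by
    rw [Multiset.esymm, Multiset.powersetCard_eq_empty _ (by omega)]
    simp
  -- enumerate the roots by `Fin R`
  obtain ⟨f, hf⟩ : ∃ f : Fin R → ℂ, Multiset.map f Finset.univ.val = μ := by
    have hl : μ.toList.length = R := by rw [Multiset.length_toList, hcard]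
    refine ⟨fun i => μ.toList.get (Fin.cast hl.symm i), ?_⟩
    have huv : (Finset.univ.val : Multiset (Fin R)) = ↑(List.finRange R) := rfl
    rw [huv]
    rw [Multiset.map_coe]
    rw [← List.ofFn_eq_map]
    conv_rhs => rw [← Multiset.coe_toList μ]
    congr 1
    refine List.ext_getElem (by simp [hl]) ?_
    intro n h1 h2
    simp
  have hps : ∀ n, MvPolynomial.aeval f (MvPolynomial.psum (Fin R) ℂ n)
      = (μ.map (fun a => a ^ n)).sum := by
    intro n
    rw [MvPolynomial.psum, map_sum]
    simp only [map_pow, MvPolynomial.aeval_X]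
    rw [← hf, Multiset.map_map]
    rfl
  have hes : ∀ n, MvPolynomial.aeval f (MvPolynomial.esymm (Fin R) ℂ n) = μ.esymm n := by
    intro n
    rw [MvPolynomial.aeval_esymm_eq_multiset_esymm, hf]
  -- Newton's identities for the roots
  have newton : ∀ k, 0 < k → (μ.map (fun a => a ^ k)).sum =
      (-1)^(k+1) * k * μ.esymm k -
      ∑ a ∈ antidiagonal k with a.1 ∈ Set.Ioo 0 k,
        (-1)^a.1 * μ.esymm a.1 * (μ.map (fun x => x ^ a.2)).sum := by
    intro k hk
    have h := congrArg (MvPolynomial.aeval f)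
      (MvPolynomial.psum_eq_mul_esymm_sub_sum (Fin R) ℂ k hk)
    simpa only [map_sub, map_mul, map_sum, map_pow, map_natCast, map_neg, map_one, hps, hes]
      using h
  set P : ℕ → ℂ := fun n => (μ.map (fun a => a ^ n)).sum with hPdef
  -- the power sums
  have hP1 : P 1 = 1 := by
    simp only [hPdef]
    rw [newton 1 one_pos, Finset.sum_eq_zero, hE 1 hR]
    · norm_num
    · intro a ha
      simp only [Finset.mem_filter, Set.mem_Ioo] at ha
      omega
  have hsum : ∀ j, 2 ≤ j → (∀ m, 2 ≤ m → m < j → P m = 0) →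
      (∑ a ∈ antidiagonal j with a.1 ∈ Set.Ioo 0 j,
        (-1:ℂ)^a.1 * μ.esymm a.1 * (μ.map (fun x => x ^ a.2)).sum)
      = (-1)^(j-1) * μ.esymm (j-1) := by
    intro j hj ih
    rw [Finset.sum_eq_single (j-1, 1)]
    · have : (μ.map (fun x => x ^ 1)).sum = 1 := hP1
      rw [this, mul_one]
    · intro a ha hne
      rcases a with ⟨x, y⟩
      simp only [Finset.mem_filter, Finset.HasAntidiagonal.mem_antidiagonal, Set.mem_Ioo] at ha
      simp only [ne_eq, Prod.mk.injEq, not_and] at hne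
      have h2 : 2 ≤ y := by omega
      have : (μ.map (fun x => x ^ y)).sum = 0 := ih y h2 (by omega)
      rw [this, mul_zero]
    · intro h
      exfalso
      apply h
      simp only [Finset.mem_filter, Finset.HasAntidiagonal.mem_antidiagonal, Set.mem_Ioo]
      omega
  have hP0 : ∀ j, 2 ≤ j → j ≤ R → P j = 0 := by
    intro j hj2 hjR
    induction j using Nat.strong_induction_on with
    | _ j ih =>
    simp only [hPdef]
    rw [newton j (by omega), hsum j hj2 (fun m hm2 hmj => ih m hmj hm2 (by omega)),
      hE j hjR, hE (j-1) (by omega)]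
    have h1 : j + 1 = (j - 1) + 2 := by omega
    have h2 : (Nat.factorial j : ℂ) = j * Nat.factorial (j-1) := by
      rw [← Nat.mul_factorial_pred (by omega : j ≠ 0)]
      push_cast; ring
    have h3 : (Nat.factorial (j-1) : ℂ) ≠ 0 := Nat.cast_ne_zero.mpr (Nat.factorial_ne_zero _)
    have h4 : (j : ℂ) ≠ 0 := Nat.cast_ne_zero.mpr (by omega)
    rw [h1, h2]
    field_simp
    ring
  have hPtop : P (R + 1) = (-1 : ℂ)^(R+1) / (Nat.factorial R : ℂ) := by
    have hs := hsum (R+1) (by omega) (fun m hm2 hmR => hP0 m hm2 (by omega))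
    simp only [hPdef]
    rw [newton (R+1) (by omega), hEtop, hs, Nat.add_sub_cancel, hE R le_rfl]
    have h3 : (Nat.factorial R : ℂ) ≠ 0 := Nat.cast_ne_zero.mpr (Nat.factorial_ne_zero _)
    field_simp
    ring
  refine ⟨?_, hP0, hPtop⟩
  have : (μ.map (fun a => a ^ 1)).sum = 1 := hP1
  simpa using this
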